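/- arXiv:1510.04689 — 2 statements merged into one kernel-verified Lean document; each statement's English description precedes it below -/
import Mathlib

section
/- For every ε > 0 there exists δ > 0 such that: if F is an r-uniform hypergraph, u ∈ V(F), μ is a probability distribution on V(F) with λ(F, μ) ≥ λ(F) − δ and μ(u) ≥ ε, then λ(F, μ, u) ≥ r·λ(F) − ε. In fact δ = (ε³ − ε⁴)/r works (for ε < 1). -/
open Finset

def IsProb {V : Type*} [Fintype V] (μ : V → ℝ) : Prop :=
  (∀ v, 0 ≤ μ v) ∧ ∑ v, μ v = 1

def hDen {V : Type*} (F : Finset (Finset V)) (μ : V → ℝ) : ℝ :=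
  ∑ E ∈ F, ∏ v ∈ E, μ v

def hLink {V : Type*} [DecidableEq V] (F : Finset (Finset V)) (v : V) : Finset (Finset V) :=
  (F.filter (fun E => v ∈ E)).image (fun E => E.erase v)

def linkDen {V : Type*} [DecidableEq V] (F : Finset (Finset V)) (μ : V → ℝ) (v : V) : ℝ :=
  ∑ I ∈ hLink F v, ∏ u ∈ I, μ u

/-- The Lagrangian of `F`: the supremum of densities over probability distributions. -/
noncomputable def lagrangian {V : Type*} [Fintype V] (F : Finset (Finset V)) : ℝ :=
  sSup {x : ℝ | ∃ μ : V → ℝ, IsProb μ ∧ x = hDen F μ}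

private lemma add_pow_ge (a b : ℝ) (ha : 0 ≤ a) (hb : 0 ≤ b) :
    ∀ n : ℕ, b ^ (n+1) + (n+1) * a * b ^ n ≤ (a + b) ^ (n+1) := by
  intro n
  induction n with
  | zero => simp; nlinarith
  | succ m ih =>
    have h2 : 0 ≤ b ^ m := pow_nonneg hb m
    have h5 : b^(m+1) = b * b^m := by ring
    calc b ^ (m + 1 + 1) + (↑(m + 1) + 1) * a * b ^ (m + 1)
        = b * b ^ (m+1) + ((m:ℝ)+2) * a * b^(m+1) := by push_cast; ring
      _ ≤ (a + b) * (b ^ (m+1) + ((m:ℝ)+1) * a * b ^ m) := by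
          rw [h5]
          nlinarith [mul_nonneg (mul_nonneg (show (0:ℝ) ≤ (m:ℝ)+1 by positivity)
            (mul_nonneg ha ha)) h2]
      _ ≤ (a + b) * (a+b)^(m+1) := mul_le_mul_of_nonneg_left ih (by linarith)
      _ = (a+b)^(m+1+1) := by ring

private lemma esymm_le {V : Type*} [DecidableEq V] (μ : V → ℝ) (hμ : ∀ v, 0 ≤ μ v)
    (t : Finset V) :
    ∀ r : ℕ, (r.factorial : ℝ) * ∑ E ∈ t.powersetCard r, ∏ v ∈ E, μ v ≤ (∑ v ∈ t, μ v) ^ r := by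
  induction t using Finset.induction with
  | empty =>
    intro r
    cases r with
    | zero => simp
    | succ m =>
      rw [Finset.powersetCard_eq_empty.2 (by simp)]
      simp
  | @insert a t ha ih =>
    classical
    intro r
    cases r with
    | zero => simp
    | succ m =>
      rw [powersetCard_succ_insert ha]
      have hdisj : Disjoint (powersetCard (m+1) t) ((powersetCard m t).image (insert a)) := by
        rw [Finset.disjoint_left]
        intro E hE hE'
        obtain ⟨E', hE', rfl⟩ := Finset.mem_image.1 hE'
        exact ha ((Finset.mem_powersetCard.1 hE).1 (Finset.mem_insert_self a E'))
      rw [Finset.sum_union hdisj, Finset.sum_image ?inj]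
      case inj =>
        intro E₁ h₁ E₂ h₂ h
        have n₁ : a ∉ E₁ := fun h' => ha ((Finset.mem_powersetCard.1 h₁).1 h')
        have n₂ : a ∉ E₂ := fun h' => ha ((Finset.mem_powersetCard.1 h₂).1 h')
        rw [← Finset.erase_insert n₁, h, Finset.erase_insert n₂]
      have hprod : ∀ E ∈ powersetCard m t, ∏ v ∈ insert a E, μ v = μ a * ∏ v ∈ E, μ v := by
        intro E hE
        exact Finset.prod_insert (fun h' => ha ((Finset.mem_powersetCard.1 hE).1 h'))
      rw [Finset.sum_congr rfl hprod, ← Finset.mul_sum, Finset.sum_insert ha]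
      set S := ∑ v ∈ t, μ v with hS
      have hSnn : 0 ≤ S := Finset.sum_nonneg fun v _ => hμ v
      have e1 := ih (m+1)
      have e2 := ih m
      have hbin := add_pow_ge (μ a) S (hμ a) hSnn m
      have hfact : ((m+1).factorial : ℝ) = (m+1) * (m.factorial : ℝ) := by
        rw [Nat.factorial_succ]; push_cast; ring
      have key : ((m+1).factorial : ℝ) * (μ a * ∑ E ∈ t.powersetCard m, ∏ v ∈ E, μ v)
          ≤ (m+1) * μ a * S ^ m := by
        rw [hfact]
        calc (m+1) * (m.factorial : ℝ) * (μ a * ∑ E ∈ t.powersetCard m, ∏ v ∈ E, μ v)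
            = (m+1) * μ a * ((m.factorial : ℝ) * ∑ E ∈ t.powersetCard m, ∏ v ∈ E, μ v) := by ring
          _ ≤ (m+1) * μ a * S ^ m := by
              exact mul_le_mul_of_nonneg_left e2
                (mul_nonneg (by positivity) (hμ a))
      calc ((m+1).factorial : ℝ) * (∑ E ∈ t.powersetCard (m+1), ∏ v ∈ E, μ v
              + μ a * ∑ E ∈ t.powersetCard m, ∏ v ∈ E, μ v)
          = ((m+1).factorial : ℝ) * ∑ E ∈ t.powersetCard (m+1), ∏ v ∈ E, μ v
            + ((m+1).factorial : ℝ) * (μ a * ∑ E ∈ t.powersetCard m, ∏ v ∈ E, μ v) := by ring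
        _ ≤ S ^ (m+1) + (m+1) * μ a * S ^ m := add_le_add e1 key
        _ ≤ (μ a + S) ^ (m+1) := hbin

private lemma geom_upper (s : ℝ) (hs : 0 ≤ s) :
    ∀ m : ℕ, (1+s) ^ (m+1) - 1 ≤ (m+1) * s * (1+s) ^ m := by
  intro m
  induction m with
  | zero => simp
  | succ k ih =>
    have hp : (1:ℝ) ≤ (1+s) ^ (k+1) := one_le_pow₀ (by linarith)
    have e1 : (1+s) ^ (k+1+1) = (1+s) * (1+s)^(k+1) := by ring
    have e2 : (1+s) ^ (k+1) = (1+s) * (1+s)^k := by ring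
    push_cast
    rw [e1]
    rw [e2] at ih hp
    nlinarith [mul_le_mul_of_nonneg_left ih (by linarith : (0:ℝ) ≤ 1+s),
      mul_nonneg hs (by linarith : (0:ℝ) ≤ (1+s) * (1+s)^k - 1)]

private lemma geom_lower (s : ℝ) (hs : 0 ≤ s) :
    ∀ m : ℕ, 2 * ((m+1) * s * (1+s) ^ m - ((1+s) ^ (m+1) - 1))
      ≤ s^2 * (1+s)^m * ((m+1) * m) := by
  intro m
  induction m with
  | zero => simp
  | succ k ih =>
    have hp : (1:ℝ) ≤ (1+s) ^ k := one_le_pow₀ (by linarith)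
    have hp2 : (0:ℝ) ≤ (1+s) ^ k := by linarith
    have e2 : (1+s) ^ (k+1) = (1+s) * (1+s)^k := by ring
    have e3 : (1+s) ^ (k+1+1) = (1+s) * ((1+s) * (1+s)^k) := by ring
    push_cast
    rw [e3]
    rw [e2] at ih ⊢
    nlinarith [ih, mul_nonneg (mul_nonneg (mul_nonneg (mul_nonneg
        (mul_nonneg hs hs) hs) hp2) (by positivity : (0:ℝ) ≤ (k:ℝ)+1))
        (by positivity : (0:ℝ) ≤ (k:ℝ)+2)]

set_option maxHeartbeats 1000000 in
/-- For every `ε ∈ (0,1)` the choice `δ = (ε³ − ε⁴)/r` works: if `F` is an `r`-uniform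
hypergraph, `μ` a probability distribution with `λ(F,μ) ≥ λ(F) − δ` and `μ(u) ≥ ε`,
then `λ(F,μ,u) ≥ r·λ(F) − ε`. -/
theorem link_density_large {V : Type*} [Fintype V] [DecidableEq V] (r : ℕ) (hr : 0 < r)
    (ε : ℝ) (hε : 0 < ε) (hε1 : ε < 1) :
    ∃ δ : ℝ, 0 < δ ∧ δ = (ε ^ 3 - ε ^ 4) / r ∧
      ∀ (F : Finset (Finset V)) (u : V) (μ : V → ℝ),
        (∀ E ∈ F, E.card = r) → IsProb μ →
        lagrangian F - δ ≤ hDen F μ → ε ≤ μ u →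
        (r : ℝ) * lagrangian F - ε ≤ linkDen F μ u := by
  obtain ⟨m, rfl⟩ : ∃ m, r = m + 1 := ⟨r - 1, (Nat.succ_pred_eq_of_pos hr).symm⟩
  obtain ⟨δ, hδdef⟩ : ∃ x : ℝ, x = (ε ^ 3 - ε ^ 4) / ((m + 1 : ℕ) : ℝ) := ⟨_, rfl⟩
  have hε34 : 0 < ε ^ 3 - ε ^ 4 := by
    have h0 : 0 < ε ^ 3 * (1 - ε) := mul_pos (by positivity) (by linarith)
    nlinarith
  have hδpos : 0 < δ := by
    rw [hδdef]; positivity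
  have hscl : ε^4 / 2 + (1+ε^2) * (ε^3 - ε^4) ≤ ε^3 := by nlinarith [mul_nonneg (pow_nonneg hε.le 4) (sq_nonneg (ε - 1/2))]
  refine ⟨δ, hδpos, hδdef, ?_⟩
  intro F u μ hcard hprob hlam hμu
  obtain ⟨hμ0, hμ1⟩ := hprob
  obtain ⟨lam, hlamdef⟩ : ∃ x : ℝ, x = lagrangian F := ⟨_, rfl⟩
  rw [← hlamdef] at hlam ⊢
  obtain ⟨S, hSdef⟩ : ∃ S : Set ℝ, S = {x : ℝ | ∃ μ' : V → ℝ, IsProb μ' ∧ x = hDen F μ'} :=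
    ⟨_, rfl⟩
  have hlamS : lam = sSup S := by rw [hlamdef, lagrangian, hSdef]
  -- upper bound for densities
  have hF_sub : F ⊆ Finset.univ.powersetCard (m+1) := by
    intro E hE
    rw [Finset.mem_powersetCard]
    exact ⟨Finset.subset_univ E, hcard E hE⟩
  have hub : ∀ x ∈ S, x ≤ (((m+1).factorial : ℝ))⁻¹ := by
    rw [hSdef]
    rintro x ⟨μ', ⟨hμ'0, hμ'1⟩, rfl⟩
    have h1 : hDen F μ' ≤ ∑ E ∈ Finset.univ.powersetCard (m+1), ∏ v ∈ E, μ' v := by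
      apply Finset.sum_le_sum_of_subset_of_nonneg hF_sub
      intro E _ _
      exact Finset.prod_nonneg fun v _ => hμ'0 v
    have h2 := esymm_le μ' hμ'0 Finset.univ (m+1)
    rw [hμ'1, one_pow] at h2
    have hfpos : (0:ℝ) < ((m+1).factorial : ℝ) := by positivity
    calc hDen F μ' ≤ ∑ E ∈ Finset.univ.powersetCard (m+1), ∏ v ∈ E, μ' v := h1
      _ ≤ (((m+1).factorial : ℝ))⁻¹ := by
          rw [inv_eq_one_div, le_div_iff₀ hfpos]
          linarith
  have hbdd : BddAbove S := ⟨_, hub⟩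
  have hne : (hDen F μ) ∈ S := by
    rw [hSdef]; exact ⟨μ, ⟨hμ0, hμ1⟩, rfl⟩
  have hlam_le : lam ≤ (((m+1).factorial : ℝ))⁻¹ := by
    rw [hlamS]; exact csSup_le ⟨_, hne⟩ hub
  -- the perturbed distribution
  obtain ⟨ν, hνdef⟩ : ∃ ν : V → ℝ,
      ν = fun v => (1 + ε^2) * μ v - if v = u then ε^2 else 0 := ⟨_, rfl⟩
  have hprobν : IsProb ν := by
    constructor
    · intro v
      by_cases hv : v = u
      · subst hv
        simp only [hνdef]
        simp only [if_true]
        nlinarith [mul_le_mul_of_nonneg_left hμu (by positivity : (0:ℝ) ≤ 1+ε^2),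
          mul_nonneg hε.le (by linarith : (0:ℝ) ≤ 1-ε)]
      · simp only [hνdef, if_neg hv]
        have := hμ0 v
        nlinarith
    · simp only [hνdef]
      rw [Finset.sum_sub_distrib, ← Finset.mul_sum, hμ1, Finset.sum_ite_eq' Finset.univ u
        (fun _ => ε^2)]
      simp
  -- split densities at u
  obtain ⟨Lk, hLkdef⟩ : ∃ x : ℝ, x = ∑ E ∈ F.filter (fun E => u ∈ E), ∏ v ∈ E.erase u, μ v :=
    ⟨_, rfl⟩
  obtain ⟨Rk, hRkdef⟩ : ∃ x : ℝ, x = ∑ E ∈ F.filter (fun E => ¬ u ∈ E), ∏ v ∈ E, μ v :=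
    ⟨_, rfl⟩
  have hL : linkDen F μ u = Lk := by
    rw [linkDen, hLink, Finset.sum_image, hLkdef]
    intro E₁ h₁ E₂ h₂ h
    beta_reduce at h
    rw [← Finset.insert_erase (Finset.mem_filter.1 h₁).2, h,
      Finset.insert_erase (Finset.mem_filter.1 h₂).2]
  have hμ_val : hDen F μ = μ u * Lk + Rk := by
    rw [hDen, ← Finset.sum_filter_add_sum_filter_not F (fun E => u ∈ E), hLkdef, hRkdef,
      Finset.mul_sum]
    congr 1
    apply Finset.sum_congr rfl
    intro E hE
    exact (Finset.mul_prod_erase E μ (Finset.mem_filter.1 hE).2).symm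
  have hν_val : hDen F ν
      = ((1+ε^2) * μ u - ε^2) * ((1+ε^2)^m * Lk) + ((1+ε^2) * (1+ε^2)^m) * Rk := by
    rw [hDen, ← Finset.sum_filter_add_sum_filter_not F (fun E => u ∈ E)]
    congr 1
    · rw [hLkdef, Finset.mul_sum, Finset.mul_sum]
      apply Finset.sum_congr rfl
      intro E hE
      obtain ⟨hEF, huE⟩ := Finset.mem_filter.1 hE
      rw [← Finset.mul_prod_erase E ν huE]
      have hν_u : ν u = (1+ε^2) * μ u - ε^2 := by simp [hνdef]
      have herase : ∏ v ∈ E.erase u, ν v = (1+ε^2)^m * ∏ v ∈ E.erase u, μ v := by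
        have hv : ∀ v ∈ E.erase u, ν v = (1+ε^2) * μ v := by
          intro v hvmem
          simp [hνdef, Finset.ne_of_mem_erase hvmem]
        rw [Finset.prod_congr rfl hv, Finset.prod_mul_distrib, Finset.prod_const,
          Finset.card_erase_of_mem huE, hcard E hEF, Nat.add_sub_cancel]
      rw [hν_u, herase]
    · rw [hRkdef, Finset.mul_sum]
      apply Finset.sum_congr rfl
      intro E hE
      obtain ⟨hEF, huE⟩ := Finset.mem_filter.1 hE
      have hv : ∀ v ∈ E, ν v = (1+ε^2) * μ v := by
        intro v hvmem
        have : v ≠ u := fun h => huE (h ▸ hvmem)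
        simp [hνdef, this]
      rw [Finset.prod_congr rfl hv, Finset.prod_mul_distrib, Finset.prod_const, hcard E hEF]
      ring
  -- key inequalities
  obtain ⟨P, hPdef⟩ : ∃ x : ℝ, x = (1+ε^2)^m := ⟨_, rfl⟩
  have hP1 : (1:ℝ) ≤ P := by rw [hPdef]; exact one_le_pow₀ (by nlinarith)
  have hP0 : (0:ℝ) < P := by linarith
  have hν_le : hDen F ν ≤ lam := by
    rw [hlamS]
    apply le_csSup hbdd
    rw [hSdef]
    exact ⟨ν, hprobν, rfl⟩
  have hν_le' : ((1+ε^2) * μ u - ε^2) * (P * Lk) + ((1+ε^2) * P) * Rk ≤ lam := by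
    rw [hPdef, ← hν_val]; exact hν_le
  have hD' : lam - δ ≤ μ u * Lk + Rk := by rw [← hμ_val]; exact hlam
  have h4 : (1+ε^2) * P * (lam - δ) ≤ (1+ε^2) * P * (μ u * Lk + Rk) :=
    mul_le_mul_of_nonneg_left hD' (by positivity)
  -- geometric bounds with s = ε²
  have hgu := geom_upper (ε^2) (by positivity) m
  have hgl := geom_lower (ε^2) (by positivity) m
  have hpowsucc : (1+ε^2)^(m+1) = (1+ε^2) * P := by rw [hPdef]; ring
  rw [hpowsucc, ← hPdef] at hgu hgl
  have h44 : ((ε^2)^2 : ℝ) = ε^4 := by ring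
  rw [h44] at hgl
  -- bound lam * A
  have hA0 : (0:ℝ) ≤ ((m:ℝ)+1) * ε^2 * P - ((1+ε^2) * P - 1) := by linarith
  have hfact_ge : (((m:ℝ)+1) * m) ≤ ((m+1).factorial : ℝ) := by
    have h1 : (m+1) * m ≤ (m+1).factorial := by
      rw [Nat.factorial_succ]
      exact Nat.mul_le_mul_left (m+1) (Nat.self_le_factorial m)
    calc (((m:ℝ)+1) * m) = (((m+1) * m : ℕ) : ℝ) := by push_cast; ring
      _ ≤ ((m+1).factorial : ℝ) := by exact_mod_cast h1
  have hfpos : (0:ℝ) < ((m+1).factorial : ℝ) := by positivity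
  have hlamA : lam * (((m:ℝ)+1) * ε^2 * P - ((1+ε^2) * P - 1)) ≤ ε^4 * P / 2 := by
    calc lam * (((m:ℝ)+1) * ε^2 * P - ((1+ε^2) * P - 1))
        ≤ (((m+1).factorial : ℝ))⁻¹ * (((m:ℝ)+1) * ε^2 * P - ((1+ε^2) * P - 1)) :=
          mul_le_mul_of_nonneg_right hlam_le hA0
      _ ≤ ε^4 * P / 2 := by
          rw [inv_mul_le_iff₀ hfpos]
          have hb : ε^4 * P * (((m:ℝ)+1) * m) ≤ ε^4 * P * ((m+1).factorial : ℝ) :=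
            mul_le_mul_of_nonneg_left hfact_ge (by positivity)
          nlinarith
  -- bound on δ term
  have hδ_le : δ ≤ ε^3 - ε^4 := by
    rw [hδdef]
    apply div_le_self hε34.le
    exact_mod_cast Nat.le_add_left 1 m
  have hδ' : (1+ε^2) * P * δ ≤ (1+ε^2) * P * (ε^3 - ε^4) :=
    mul_le_mul_of_nonneg_left hδ_le (by positivity)
  have hmain : ε^4 * P / 2 + (1+ε^2) * P * (ε^3 - ε^4) ≤ ε^3 * P := by
    linarith [mul_le_mul_of_nonneg_left hscl hP0.le]
  -- conclude
  rw [hL]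
  have hfinal : (ε^2 * P) * (((m:ℕ)+1 : ℝ) * lam - ε) ≤ (ε^2 * P) * Lk := by
    push_cast
    linarith [hν_le', h4, hlamA, hδ', hmain]
  have hlast := le_of_mul_le_mul_left hfinal (by positivity : (0:ℝ) < ε^2 * P)
  push_cast at hlast ⊢
  linarith
end

section
/- Let G be an r-uniform hypergraph covering pairs (every pair of vertices is contained in some edge), and suppose every blowup of G is F-free for some r-graph F. Then λ(G) ≤ π(F)/r!, where λ(G) is the Lagrangian of G and π(F) is the Turán density of F. More precisely, λ(G) = sup over blowups B of G of |B|/v(B)^r, and this supremum is at most π(F)/r!. -/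
open Finset Filter

/-- `G` covers pairs: every pair of distinct vertices lies in an edge. -/
def CoversPairs {V : Type*} [Fintype V] (G : Finset (Finset V)) : Prop :=
  ∀ u v : V, u ≠ v → ∃ E ∈ G, u ∈ E ∧ v ∈ E

/-- The blowup of `G` along a map `f : W → V`: the edges are the sets on which `f` is
injective and whose image is an edge of `G`. -/
def blowupAlong {V W : Type*} [Fintype W] [DecidableEq V] [DecidableEq W]
    (G : Finset (Finset V)) (f : W → V) : Finset (Finset W) :=
  (Finset.univ : Finset W).powerset.filter
    (fun E => (E.image f).card = E.card ∧ E.image f ∈ G)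

/-- `Gn` contains a copy of `F`. -/
def ContainsHCopy {U W : Type*} [DecidableEq W] (F : Finset (Finset U))
    (Gn : Finset (Finset W)) : Prop :=
  ∃ f : U ↪ W, ∀ E ∈ F, E.image f ∈ Gn

/-- The Turán number `ex(n, F)` for `r`-uniform hypergraphs on `n` vertices. -/
noncomputable def exNum {U : Type*} (r : ℕ) (F : Finset (Finset U)) (n : ℕ) : ℕ :=
  sSup {m : ℕ | ∃ Gn : Finset (Finset (Fin n)), (∀ E ∈ Gn, E.card = r) ∧
    ¬ ContainsHCopy F Gn ∧ m = Gn.card}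


section Aux

variable {V : Type*} [Fintype V] [DecidableEq V]

/-- The size of the fiber of `f` over `v`. -/
def fibc {n : ℕ} (f : Fin n → V) (v : V) : ℕ :=
  (Finset.univ.filter (fun i => f i = v)).card

lemma fibc_sum {n : ℕ} (f : Fin n → V) : ∑ v, fibc f v = n := by
  have := Finset.card_eq_sum_card_fiberwise (f := f) (s := Finset.univ) (t := Finset.univ)
    (fun x _ => mem_univ _)
  simpa [fibc] using this.symm

lemma count_transversal {V : Type*} [Fintype V] [DecidableEq V] {n : ℕ}
    (f : Fin n → V) (A : Finset V) :
    ((Finset.univ : Finset (Fin n)).powerset.filter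
      (fun E => E.image f = A ∧ E.card = A.card)).card = ∏ v ∈ A, fibc f v := by
  classical
  rw [show ∏ v ∈ A, fibc f v = (A.pi (fun v => Finset.univ.filter (fun i => f i = v))).card from
    (Finset.card_pi _ _).symm]
  symm
  apply Finset.card_bij (i := fun g _ => A.attach.image (fun a => g a.1 a.2))
  · -- maps to
    intro g hg
    have hgmem : ∀ (v) (hv : v ∈ A), f (g v hv) = v := by
      intro v hv
      have := (Finset.mem_pi).mp hg v hv
      exact (Finset.mem_filter.mp this).2
    have hinj : Set.InjOn (fun a : {x // x ∈ A} => g a.1 a.2) A.attach := by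
      intro a _ b _ hab
      have hab2 : g a.1 a.2 = g b.1 b.2 := hab
      have : f (g a.1 a.2) = f (g b.1 b.2) := by rw [hab2]
      rw [hgmem, hgmem] at this
      exact Subtype.ext this
    have himg : (A.attach.image (fun a => g a.1 a.2)).image f = A := by
      rw [Finset.image_image]
      have : A.attach.image (f ∘ fun a => g a.1 a.2) = A.attach.image (fun a => a.1) := by
        apply Finset.image_congr
        intro a _
        exact hgmem a.1 a.2
      rw [this, Finset.attach_image_val]
    have hcard : (A.attach.image (fun a => g a.1 a.2)).card = A.card := by
      rw [Finset.card_image_of_injOn hinj, Finset.card_attach]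
    simp only [Finset.mem_filter, Finset.mem_powerset]
    exact ⟨Finset.subset_univ _, himg, hcard⟩
  · -- injective
    intro g hg g' hg' hgg'
    have hgmem : ∀ (v) (hv : v ∈ A), f (g v hv) = v := fun v hv =>
      (Finset.mem_filter.mp ((Finset.mem_pi).mp hg v hv)).2
    have hgmem' : ∀ (v) (hv : v ∈ A), f (g' v hv) = v := fun v hv =>
      (Finset.mem_filter.mp ((Finset.mem_pi).mp hg' v hv)).2
    funext v hv
    have : g v hv ∈ A.attach.image (fun a => g' a.1 a.2) := by
      rw [← hgg']
      exact Finset.mem_image.mpr ⟨⟨v, hv⟩, Finset.mem_attach _ _, rfl⟩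
    obtain ⟨a, _, ha⟩ := Finset.mem_image.mp this
    have : a.1 = v := by rw [← hgmem' a.1 a.2, ha, hgmem]
    subst this
    exact ha.symm
  · -- surjective
    intro E hE
    simp only [Finset.mem_filter, Finset.mem_powerset] at hE
    obtain ⟨-, himg, hcard⟩ := hE
    have hinj : Set.InjOn f E := by
      rw [← Finset.card_image_iff, himg, hcard]
    have huniq : ∀ v ∈ A, ∃ i, i ∈ E ∧ f i = v := by
      intro v hv
      rw [← himg] at hv
      obtain ⟨i, hiE, hfi⟩ := Finset.mem_image.mp hv
      exact ⟨i, hiE, hfi⟩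
    refine ⟨fun v hv => (huniq v hv).choose, ?_, ?_⟩
    · rw [Finset.mem_pi]
      intro v hv
      simp only [Finset.mem_filter, Finset.mem_univ, true_and]
      exact ((huniq v hv).choose_spec).2
    · have hsub : A.attach.image (fun a => (huniq a.1 a.2).choose) ⊆ E := by
        intro i hi
        obtain ⟨a, _, ha⟩ := Finset.mem_image.mp hi
        rw [← ha]
        exact ((huniq a.1 a.2).choose_spec).1
      apply Finset.eq_of_subset_of_card_le hsub
      have : (A.attach.image (fun a => (huniq a.1 a.2).choose)).card = A.card := by
        rw [Finset.card_image_of_injOn, Finset.card_attach]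
        intro a _ b _ hab
        have hab2 : (huniq a.1 a.2).choose = (huniq b.1 b.2).choose := hab
        have : f (huniq a.1 a.2).choose = f (huniq b.1 b.2).choose := by rw [hab2]
        rw [((huniq a.1 a.2).choose_spec).2, ((huniq b.1 b.2).choose_spec).2] at this
        exact Subtype.ext this
      rw [this, ← hcard]

lemma blowup_card {n : ℕ} (G : Finset (Finset V)) (f : Fin n → V) :
    (blowupAlong G f).card = ∑ A ∈ G, ∏ v ∈ A, fibc f v := by
  classical
  rw [Finset.card_eq_sum_card_fiberwise (f := fun E => E.image f) (t := G)
    (fun E hE => (Finset.mem_filter.mp hE).2.2)]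
  refine Finset.sum_congr rfl fun A hA => ?_
  rw [← count_transversal f A]
  congr 1
  ext E
  simp only [blowupAlong, Finset.mem_filter, Finset.mem_powerset]
  constructor
  · rintro ⟨⟨hs, hc, hg⟩, himg⟩
    exact ⟨hs, himg, by rw [← himg, hc]⟩
  · rintro ⟨hs, himg, hc⟩
    exact ⟨⟨hs, by rw [himg, hc], by rw [himg]; exact hA⟩, himg⟩

lemma blowup_den {n r : ℕ} (G : Finset (Finset V)) (hG : ∀ A ∈ G, A.card = r)
    (f : Fin n → V) :
    ((blowupAlong G f).card : ℝ) / (n : ℝ) ^ r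
      = hDen G (fun v => (fibc f v : ℝ) / n) := by
  rw [blowup_card, hDen]
  push_cast
  rw [Finset.sum_div]
  refine Finset.sum_congr rfl fun A hA => ?_
  rw [Finset.prod_div_distrib, Finset.prod_const, hG A hA]

lemma exists_fibc {n : ℕ} (N : V → ℕ) (h : ∑ v, N v = n) :
    ∃ f : Fin n → V, ∀ v, fibc f v = N v := by
  classical
  subst h
  let e : (Σ v : V, Fin (N v)) ≃ Fin (∑ v, N v) :=
    Fintype.equivFinOfCardEq (by simp)
  refine ⟨fun i => (e.symm i).1, fun v => ?_⟩
  have h1 : (Finset.univ.filter (fun i => (e.symm i).1 = v))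
      = (Finset.univ.filter (fun s : Σ w, Fin (N w) => s.1 = v)).image e := by
    ext i
    simp only [Finset.mem_filter, Finset.mem_univ, true_and, Finset.mem_image]
    constructor
    · intro hi
      exact ⟨e.symm i, hi, e.apply_symm_apply i⟩
    · rintro ⟨s, hs, rfl⟩
      rwa [e.symm_apply_apply]
  have h2 : (Finset.univ.filter (fun s : Σ w, Fin (N w) => s.1 = v))
      = (Finset.univ : Finset (Fin (N v))).image (Sigma.mk v) := by
    ext ⟨w, j⟩
    simp only [Finset.mem_filter, Finset.mem_univ, true_and, Finset.mem_image]
    constructor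
    · rintro rfl
      exact ⟨j, rfl⟩
    · rintro ⟨x, hx⟩
      cases hx
      rfl
  rw [fibc, h1, Finset.card_image_of_injective _ e.injective, h2,
    Finset.card_image_of_injective _ sigma_mk_injective]
  simp

lemma isProb_fibc {n : ℕ} (hn : 0 < n) (f : Fin n → V) :
    IsProb (fun v => (fibc f v : ℝ) / n) := by
  constructor
  · intro v
    positivity
  · rw [← Finset.sum_div,
      show ∑ v, ((fibc f v : ℕ) : ℝ) = ((∑ v, fibc f v : ℕ) : ℝ) by push_cast; rfl,
      fibc_sum]
    field_simp

lemma hDen_le_card (G : Finset (Finset V)) {μ : V → ℝ} (hμ : IsProb μ) :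
    hDen G μ ≤ G.card := by
  rw [hDen]
  calc ∑ E ∈ G, ∏ v ∈ E, μ v ≤ ∑ _E ∈ G, 1 := by
        refine Finset.sum_le_sum fun E _ => Finset.prod_le_one (fun v _ => hμ.1 v) ?_
        intro v _
        rw [← hμ.2]
        exact Finset.single_le_sum (fun w _ => hμ.1 w) (Finset.mem_univ v)
    _ = G.card := by simp

lemma hDen_nonneg (G : Finset (Finset V)) {μ : V → ℝ} (hμ : IsProb μ) :
    0 ≤ hDen G μ :=
  Finset.sum_nonneg fun _ _ => Finset.prod_nonneg fun v _ => hμ.1 v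

lemma rounding {V : Type*} [Fintype V] [DecidableEq V] (μ : V → ℝ) (hμ : IsProb μ) :
    ∃ N : ℕ → V → ℕ, (∀ n, ∑ v, N n v = n) ∧
      ∀ v, Tendsto (fun n : ℕ => (N n v : ℝ) / n) atTop (nhds (μ v)) := by
  classical
  set m := Fintype.card V with hm
  set e : V ≃ Fin m := Fintype.equivFin V with he
  set ps : ℕ → ℝ := fun k => ∑ v ∈ Finset.univ.filter (fun v => (e v : ℕ) < k), μ v with hps
  have ps0 : ps 0 = 0 := by simp [hps]
  have psm : ps m = 1 := by
    rw [hps]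
    simp only
    rw [Finset.filter_true_of_mem (fun v _ => (e v).2)]
    exact hμ.2
  have psmono : Monotone ps := by
    intro b c hbc
    apply Finset.sum_le_sum_of_subset_of_nonneg
    · intro v hv
      simp only [Finset.mem_filter, Finset.mem_univ, true_and] at hv ⊢
      omega
    · intro v _ _
      exact hμ.1 v
  have psstep : ∀ v : V, ps ((e v : ℕ) + 1) = μ v + ps (e v : ℕ) := by
    intro v
    have hset : Finset.univ.filter (fun w => (e w : ℕ) < (e v : ℕ) + 1)
        = insert v (Finset.univ.filter (fun w => (e w : ℕ) < (e v : ℕ))) := by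
      ext w
      simp only [Finset.mem_filter, Finset.mem_univ, true_and, Finset.mem_insert]
      rw [Nat.lt_succ_iff_lt_or_eq]
      constructor
      · rintro (h | h)
        · exact Or.inr h
        · left
          have : e w = e v := Fin.val_injective h
          exact e.injective this
      · rintro (rfl | h)
        · exact Or.inr rfl
        · exact Or.inl h
    have hvnot : v ∉ Finset.univ.filter (fun w => (e w : ℕ) < (e v : ℕ)) := by
      simp
    rw [hps]
    simp only
    rw [hset, Finset.sum_insert hvnot]
  set a : ℕ → ℕ → ℤ := fun n k => ⌊(n : ℝ) * ps k⌋ with ha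
  have amono : ∀ n, Monotone (a n) := fun n b c hbc =>
    Int.floor_mono (mul_le_mul_of_nonneg_left (psmono hbc) (by positivity))
  refine ⟨fun n v => (a n ((e v : ℕ) + 1) - a n (e v : ℕ)).toNat, ?_, ?_⟩
  · intro n
    have hz : ∑ v, ((a n ((e v : ℕ) + 1) - a n (e v : ℕ)).toNat : ℤ) = (n : ℤ) := by
      have h1 : ∀ v : V, ((a n ((e v : ℕ) + 1) - a n (e v : ℕ)).toNat : ℤ)
          = a n ((e v : ℕ) + 1) - a n (e v : ℕ) := fun v =>
        Int.toNat_of_nonneg (sub_nonneg.mpr (amono n (Nat.le_succ _)))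
      rw [Finset.sum_congr rfl (fun v _ => h1 v)]
      calc ∑ v : V, (a n ((e v : ℕ) + 1) - a n (e v : ℕ))
          = ∑ j : Fin m, (a n ((j : ℕ) + 1) - a n (j : ℕ)) :=
            Equiv.sum_comp e (fun j : Fin m => a n ((j : ℕ) + 1) - a n (j : ℕ))
        _ = ∑ j ∈ Finset.range m, (a n (j + 1) - a n j) :=
            Fin.sum_univ_eq_sum_range (fun j => a n (j + 1) - a n j) m
        _ = a n m - a n 0 := Finset.sum_range_sub (fun j => a n j) m
        _ = (n : ℤ) := by
            rw [ha]
            simp only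
            rw [psm, ps0]
            simp
    exact_mod_cast hz
  · intro v
    have key : ∀ n : ℕ, 1 ≤ n →
        ‖((a n ((e v : ℕ) + 1) - a n (e v : ℕ)).toNat : ℝ) / n - μ v‖ ≤ 2 / n := by
      intro n hn
      have hnpos : (0 : ℝ) < n := by exact_mod_cast hn
      have h1 : ((a n ((e v : ℕ) + 1) - a n (e v : ℕ)).toNat : ℤ)
          = a n ((e v : ℕ) + 1) - a n (e v : ℕ) :=
        Int.toNat_of_nonneg (sub_nonneg.mpr (amono n (Nat.le_succ _)))
      have h2 : ((a n ((e v : ℕ) + 1) - a n (e v : ℕ)).toNat : ℝ)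
          = (a n ((e v : ℕ) + 1) : ℝ) - (a n (e v : ℕ) : ℝ) := by
        exact_mod_cast congrArg (fun z : ℤ => (z : ℝ)) h1
      have hb1 : (n : ℝ) * ps ((e v : ℕ) + 1) - 1 < (a n ((e v : ℕ) + 1) : ℝ) :=
        Int.sub_one_lt_floor _
      have hb2 : (a n ((e v : ℕ) + 1) : ℝ) ≤ (n : ℝ) * ps ((e v : ℕ) + 1) :=
        Int.floor_le _
      have hb3 : (n : ℝ) * ps (e v : ℕ) - 1 < (a n (e v : ℕ) : ℝ) :=
        Int.sub_one_lt_floor _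
      have hb4 : (a n (e v : ℕ) : ℝ) ≤ (n : ℝ) * ps (e v : ℕ) :=
        Int.floor_le _
      have hμv : (n : ℝ) * μ v = (n : ℝ) * ps ((e v : ℕ) + 1) - (n : ℝ) * ps (e v : ℕ) := by
        rw [psstep v]; ring
      set A := (a n ((e v : ℕ) + 1) : ℝ)
      set B := (a n (e v : ℕ) : ℝ)
      set u := (n : ℝ) * ps ((e v : ℕ) + 1)
      set w := (n : ℝ) * ps (e v : ℕ)
      have heq : (A - B) / n - μ v = (A - B - (u - w)) / n := by
        field_simp
        linarith [hμv]
      rw [h2, Real.norm_eq_abs, heq, abs_div, abs_of_pos hnpos]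
      have hnum : |A - B - (u - w)| ≤ 2 := by
        rw [abs_le]
        constructor <;> linarith
      gcongr
    have h0 : Tendsto (fun n : ℕ =>
        ((a n ((e v : ℕ) + 1) - a n (e v : ℕ)).toNat : ℝ) / n - μ v) atTop (nhds 0) := by
      apply squeeze_zero_norm' ?_ (tendsto_const_div_atTop_nhds_zero_nat 2)
      filter_upwards [eventually_ge_atTop 1] with n hn using key n hn
    have h3 := h0.add (tendsto_const_nhds (x := μ v))
    simpa using h3

lemma choose_div_pow_tendsto (r : ℕ) :
    Tendsto (fun m : ℕ => ((m.choose r : ℝ)) / (m : ℝ) ^ r) atTop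
      (nhds (1 / (r.factorial : ℝ))) := by
  have hprod : Tendsto (fun m : ℕ => ∏ i ∈ Finset.range r, (1 - (i : ℝ) / m)) atTop
      (nhds 1) := by
    have : Tendsto (fun m : ℕ => ∏ i ∈ Finset.range r, (1 - (i : ℝ) / m)) atTop
        (nhds (∏ i ∈ Finset.range r, (1 : ℝ))) := by
      apply tendsto_finset_prod
      intro i _
      have := (tendsto_const_div_atTop_nhds_zero_nat (i : ℝ))
      have h2 := (tendsto_const_nhds (x := (1:ℝ)) (f := atTop (α := ℕ))).sub this
      simpa using h2
    simpa using this
  have hmain : Tendsto (fun m : ℕ => (1 / (r.factorial : ℝ)) *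
      ∏ i ∈ Finset.range r, (1 - (i : ℝ) / m)) atTop (nhds (1 / (r.factorial : ℝ))) := by
    have := (tendsto_const_nhds (x := 1 / (r.factorial : ℝ)) (f := atTop (α := ℕ))).mul hprod
    simpa using this
  apply hmain.congr'
  filter_upwards [eventually_ge_atTop r, eventually_ge_atTop 1] with m hmr hm1
  have hmpos : (0 : ℝ) < m := by exact_mod_cast hm1
  have hdesc : (m.descFactorial r : ℝ) = (r.factorial : ℝ) * (m.choose r : ℝ) := by
    exact_mod_cast congrArg (fun k : ℕ => (k : ℝ)) (Nat.descFactorial_eq_factorial_mul_choose m r)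
  have hdesc2 : (m.descFactorial r : ℝ) = ∏ i ∈ Finset.range r, ((m : ℝ) - i) := by
    rw [Nat.descFactorial_eq_prod_range]
    push_cast [Nat.cast_prod]
    apply Finset.prod_congr rfl
    intro i hi
    have : i ≤ m := le_trans (le_of_lt (Finset.mem_range.mp hi)) hmr
    rw [Nat.cast_sub this]
  have hfact : (0 : ℝ) < (r.factorial : ℝ) := by positivity
  have hprodeq : ∏ i ∈ Finset.range r, (1 - (i : ℝ) / m)
      = (∏ i ∈ Finset.range r, ((m : ℝ) - i)) / (m : ℝ) ^ r := by
    rw [eq_div_iff (by positivity),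
      show ((m : ℝ)) ^ r = ∏ _i ∈ Finset.range r, (m : ℝ) by
        rw [Finset.prod_const, Finset.card_range],
      ← Finset.prod_mul_distrib]
    apply Finset.prod_congr rfl
    intro i _
    field_simp
  rw [hprodeq, ← hdesc2, hdesc]
  field_simp

lemma le_exNum {U : Type*} (r : ℕ) (F : Finset (Finset U)) (m : ℕ)
    (Gn : Finset (Finset (Fin m))) (hcard : ∀ E ∈ Gn, E.card = r)
    (hfr : ¬ ContainsHCopy F Gn) : Gn.card ≤ exNum r F m := by
  apply le_csSup
  · refine ⟨Fintype.card (Finset (Fin m)), ?_⟩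
    rintro x ⟨Gn', -, -, rfl⟩
    exact Finset.card_le_univ Gn'
  · exact ⟨Gn, hcard, hfr, rfl⟩

lemma exNum_div_pow_tendsto {U : Type*} (r : ℕ) (F : Finset (Finset U)) (piF : ℝ)
    (hpi : Tendsto (fun n : ℕ => (exNum r F n : ℝ) / (n.choose r : ℝ)) atTop (nhds piF)) :
    Tendsto (fun m : ℕ => (exNum r F m : ℝ) / (m : ℝ) ^ r) atTop
      (nhds (piF / (r.factorial : ℝ))) := by
  have hmul := hpi.mul (choose_div_pow_tendsto r)
  have heq : piF * (1 / (r.factorial : ℝ)) = piF / (r.factorial : ℝ) := by ring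
  rw [heq] at hmul
  apply hmul.congr'
  filter_upwards [eventually_ge_atTop r, eventually_ge_atTop 1] with m hmr hm1
  have hc : (0 : ℝ) < (m.choose r : ℝ) := by
    exact_mod_cast Nat.choose_pos hmr
  field_simp

end Aux

/-- If `G` covers pairs and every blowup of `G` is `F`-free, then
`λ(G) = sup_B |B|/v(B)^r ≤ π(F)/r!`, where `π(F)` is the Turán density of `F`. -/
theorem lagrangian_le_turan_density {V U : Type*} [Fintype V] [DecidableEq V]
    [Fintype U] [DecidableEq U] (r : ℕ) (hr : 2 ≤ r)
    (G : Finset (Finset V)) (hGcard : ∀ E ∈ G, E.card = r) (hGcov : CoversPairs G)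
    (F : Finset (Finset U)) (hFcard : ∀ E ∈ F, E.card = r)
    (hfree : ∀ (n : ℕ) (f : Fin n → V), ¬ ContainsHCopy F (blowupAlong G f))
    (piF : ℝ)
    (hpi : Tendsto (fun n : ℕ => (exNum r F n : ℝ) / (n.choose r : ℝ)) atTop (nhds piF)) :
    lagrangian G = sSup {x : ℝ | ∃ n : ℕ, 0 < n ∧ ∃ f : Fin n → V,
        x = ((blowupAlong G f).card : ℝ) / (n : ℝ) ^ r} ∧
    lagrangian G ≤ piF / (r.factorial : ℝ) := by
  classical
  set S : Set ℝ := {x : ℝ | ∃ n : ℕ, 0 < n ∧ ∃ f : Fin n → V,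
    x = ((blowupAlong G f).card : ℝ) / (n : ℝ) ^ r} with hS
  set L : Set ℝ := {x : ℝ | ∃ μ : V → ℝ, IsProb μ ∧ x = hDen G μ} with hL
  have hSle : ∀ x ∈ S, ∃ μ : V → ℝ, IsProb μ ∧ x = hDen G μ := by
    rintro x ⟨n, hn, f, rfl⟩
    exact ⟨_, isProb_fibc hn f, blowup_den G hGcard f⟩
  have hSbdd : BddAbove S := by
    refine ⟨G.card, ?_⟩
    intro x hx
    obtain ⟨μ, hμ, rfl⟩ := hSle x hx
    exact hDen_le_card G hμ
  have hLbdd : BddAbove L := by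
    refine ⟨G.card, ?_⟩
    rintro x ⟨μ, hμ, rfl⟩
    exact hDen_le_card G hμ
  have hSnonneg : 0 ≤ sSup S := by
    by_cases hV : Nonempty V
    · obtain ⟨v0⟩ := hV
      have hx : ((blowupAlong G (fun _ : Fin 1 => v0)).card : ℝ) / (1 : ℝ) ^ r ∈ S :=
        ⟨1, one_pos, fun _ => v0, by norm_num⟩
      refine le_trans ?_ (le_csSup hSbdd hx)
      positivity
    · have hempty : S = ∅ := by
        ext x
        simp only [hS, Set.mem_setOf_eq, Set.mem_empty_iff_false, iff_false, not_exists]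
        rintro n ⟨hn, f, -⟩
        exact hV ⟨f ⟨0, hn⟩⟩
      rw [hempty, Real.sSup_empty]
  have hLag : lagrangian G = sSup L := rfl
  have hle1 : sSup S ≤ lagrangian G := by
    rw [hLag]
    apply Real.sSup_le
    · intro x hx
      obtain ⟨μ, hμ, hxe⟩ := hSle x hx
      exact le_csSup hLbdd ⟨μ, hμ, hxe⟩
    · by_cases hV : Nonempty V
      · have hcard : (0 : ℝ) < (Fintype.card V : ℝ) := by
          exact_mod_cast Fintype.card_pos
        have hμu : IsProb (fun _ : V => ((Fintype.card V : ℝ))⁻¹) := by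
          constructor
          · intro v
            positivity
          · rw [Finset.sum_const, Finset.card_univ, nsmul_eq_mul]
            field_simp
        refine le_trans (hDen_nonneg G hμu) (le_csSup hLbdd ⟨_, hμu, rfl⟩)
      · have hempty : L = ∅ := by
          ext x
          simp only [hL, Set.mem_setOf_eq, Set.mem_empty_iff_false, iff_false, not_exists]
          rintro μ ⟨hμ, -⟩
          haveI : IsEmpty V := not_nonempty_iff.mp hV
          have : ∑ v, μ v = 0 := by
            rw [Finset.univ_eq_empty, Finset.sum_empty]
          rw [hμ.2] at this
          norm_num at this
        rw [hempty, Real.sSup_empty]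
  have hle2 : lagrangian G ≤ sSup S := by
    rw [hLag]
    apply Real.sSup_le _ hSnonneg
    rintro x ⟨μ, hμ, rfl⟩
    obtain ⟨N, hNsum, hNtend⟩ := rounding μ hμ
    have hseq : ∀ n : ℕ, 0 < n → hDen G (fun v => (N n v : ℝ) / n) ∈ S := by
      intro n hn
      obtain ⟨f, hf⟩ := exists_fibc (N n) (hNsum n)
      refine ⟨n, hn, f, ?_⟩
      rw [blowup_den G hGcard f]
      have : (fun v => (fibc f v : ℝ) / n) = fun v => (N n v : ℝ) / n := by
        funext v
        rw [hf v]
      rw [this]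
    have htend : Tendsto (fun n : ℕ => hDen G (fun v => (N n v : ℝ) / n)) atTop
        (nhds (hDen G μ)) := by
      unfold hDen
      exact tendsto_finset_sum G fun A _ => tendsto_finset_prod A fun v _ => hNtend v
    apply le_of_tendsto htend
    filter_upwards [eventually_gt_atTop 0] with n hn
    exact le_csSup hSbdd (hseq n hn)
  have hpiF0 : 0 ≤ piF := by
    apply ge_of_tendsto' hpi
    intro m
    positivity
  have hpart2 : sSup S ≤ piF / (r.factorial : ℝ) := by
    apply Real.sSup_le
    · rintro x ⟨n, hn, f, rfl⟩
      have hkbound : ∀ k : ℕ, 0 < k →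
          ((blowupAlong G f).card : ℝ) / (n : ℝ) ^ r
            ≤ (exNum r F (k * n) : ℝ) / ((k * n : ℕ) : ℝ) ^ r := by
        intro k hk
        obtain ⟨g, hg⟩ := exists_fibc (fun v => k * fibc f v)
          (by rw [← Finset.mul_sum, fibc_sum])
        have hBg : (blowupAlong G g).card = k ^ r * (blowupAlong G f).card := by
          rw [blowup_card, blowup_card, Finset.mul_sum]
          refine Finset.sum_congr rfl fun A hA => ?_
          have : ∀ v ∈ A, fibc g v = k * fibc f v := fun v _ => hg v
          rw [Finset.prod_congr rfl this, Finset.prod_mul_distrib, Finset.prod_const,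
            hGcard A hA]
        have hBle : (blowupAlong G g).card ≤ exNum r F (k * n) := by
          apply le_exNum
          · intro E hE
            obtain ⟨-, hc, hgm⟩ := Finset.mem_filter.mp hE
            rw [← hc]
            exact hGcard _ hgm
          · exact hfree (k * n) g
        have hkr : (0 : ℝ) < (k : ℝ) ^ r := by positivity
        have hnr : (0 : ℝ) < (n : ℝ) ^ r := by
          have : (0 : ℝ) < (n : ℝ) := by exact_mod_cast hn
          positivity
        have heq : ((blowupAlong G f).card : ℝ) / (n : ℝ) ^ r
            = ((blowupAlong G g).card : ℝ) / ((k * n : ℕ) : ℝ) ^ r := by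
          rw [hBg]
          push_cast
          rw [mul_pow, mul_div_mul_left _ _ (ne_of_gt hkr)]
        rw [heq]
        have hle' : ((blowupAlong G g).card : ℝ) ≤ (exNum r F (k * n) : ℝ) := by
          exact_mod_cast hBle
        gcongr
      have htendn : Tendsto (fun k : ℕ => (exNum r F (k * n) : ℝ) / ((k * n : ℕ) : ℝ) ^ r)
          atTop (nhds (piF / (r.factorial : ℝ))) := by
        apply (exNum_div_pow_tendsto r F piF hpi).comp
        apply tendsto_atTop_mono (fun k => Nat.le_mul_of_pos_right k hn) tendsto_id
      apply ge_of_tendsto htendn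
      filter_upwards [eventually_gt_atTop 0] with k hk using hkbound k hk
    · positivity
  exact ⟨le_antisymm hle2 hle1, hle2.trans hpart2⟩
end
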